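/- For Re s > 1, the Dirichlet series F(s) = ∑_{n≥1} (n/ψ(n)) n^{−s} satisfies F(s) = ζ(s)·ζ(2s+2)/ζ(s+1) · ∏_p (1 + 1/(p^{s+2}(1+1/p)) − 1/(p^{2s+2}(1+1/p))), where ζ is the Riemann zeta function. -/

import Mathlib

open Complex

def dedekindPsi (n : ℕ) : ℤ :=
  ∑ d ∈ n.divisors, (d : ℤ) * (ArithmeticFunction.moebius (n / d)) ^ 2

noncomputable def Fterm (s : ℂ) (n : ℕ) : ℂ :=
  if n = 0 then 0 else ((n : ℂ) / (dedekindPsi n : ℂ)) * (n : ℂ) ^ (-s)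

/-! ### Auxiliary lemmas on `dedekindPsi` -/

lemma dedekindPsi_one : dedekindPsi 1 = 1 := by
  simp [dedekindPsi]

lemma dedekindPsi_mul {m n : ℕ} (h : Nat.Coprime m n) :
    dedekindPsi (m * n) = dedekindPsi m * dedekindPsi n := by
  have hmu : (ArithmeticFunction.moebius.pmul ArithmeticFunction.moebius).IsMultiplicative :=
    ArithmeticFunction.isMultiplicative_moebius.pmul ArithmeticFunction.isMultiplicative_moebius
  have hid : ((ArithmeticFunction.id : ArithmeticFunction ℕ) :
      ArithmeticFunction ℤ).IsMultiplicative :=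
    ArithmeticFunction.isMultiplicative_id.natCast
  have key : ∀ k : ℕ, dedekindPsi k =
      (((ArithmeticFunction.id : ArithmeticFunction ℕ) : ArithmeticFunction ℤ) *
        (ArithmeticFunction.moebius.pmul ArithmeticFunction.moebius)) k := by
    intro k
    rw [ArithmeticFunction.mul_apply, Nat.sum_divisorsAntidiagonal
      (fun a b => (((ArithmeticFunction.id : ArithmeticFunction ℕ) : ArithmeticFunction ℤ) a *
        (ArithmeticFunction.moebius.pmul ArithmeticFunction.moebius) b))]
    simp [dedekindPsi, sq]
  rw [key, key, key, (hid.mul hmu).map_mul_of_coprime h]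

lemma dedekindPsi_prime_pow {p : ℕ} (hp : p.Prime) (e : ℕ) :
    dedekindPsi (p ^ (e + 1)) = (p : ℤ) ^ (e + 1) + (p : ℤ) ^ e := by
  rw [dedekindPsi, Nat.sum_divisors_prime_pow hp]
  rw [Finset.sum_range_succ, Finset.sum_range_succ]
  have h0 : ∀ i ∈ Finset.range e, (↑(p ^ i) : ℤ) *
      (ArithmeticFunction.moebius (p ^ (e + 1) / p ^ i)) ^ 2 = 0 := by
    intro i hi
    rw [Finset.mem_range] at hi
    rw [Nat.pow_div (by omega) hp.pos, ArithmeticFunction.moebius_apply_prime_pow hp (by omega),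
      if_neg (by omega)]
    ring
  rw [Finset.sum_eq_zero h0, Nat.pow_div (by omega) hp.pos, Nat.pow_div le_rfl hp.pos]
  simp [ArithmeticFunction.moebius_apply_prime_pow hp, ArithmeticFunction.moebius_apply_one,
    ArithmeticFunction.moebius_apply_prime hp]
  ring

lemma le_dedekindPsi {n : ℕ} (hn : n ≠ 0) : (n : ℤ) ≤ dedekindPsi n := by
  have hmem : n ∈ n.divisors := Nat.mem_divisors_self n hn
  have := Finset.single_le_sum
    (f := fun d : ℕ => (d : ℤ) * (ArithmeticFunction.moebius (n / d)) ^ 2)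
    (fun d _ => by positivity) hmem
  rw [dedekindPsi]
  simpa [Nat.div_self (Nat.pos_of_ne_zero hn)] using this

/-! ### Auxiliary lemmas on `Fterm` -/

lemma Fterm_one (s : ℂ) : Fterm s 1 = 1 := by
  simp [Fterm, dedekindPsi_one]

lemma Fterm_mul {s : ℂ} {m n : ℕ} (h : Nat.Coprime m n) :
    Fterm s (m * n) = Fterm s m * Fterm s n := by
  rcases eq_or_ne m 0 with rfl | hm
  · simp [Fterm]
  rcases eq_or_ne n 0 with rfl | hn
  · simp [Fterm]
  have hcpow : ((m * n : ℕ) : ℂ) ^ (-s) = ((m : ℕ) : ℂ) ^ (-s) * ((n : ℕ) : ℂ) ^ (-s) := by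
    push_cast
    rw [← ofReal_natCast m, ← ofReal_natCast n]
    exact mul_cpow_ofReal_nonneg m.cast_nonneg n.cast_nonneg _
  rw [Fterm, Fterm, Fterm, if_neg (by positivity), if_neg hm, if_neg hn, dedekindPsi_mul h, hcpow]
  push_cast
  ring

lemma Fterm_norm_le (s : ℂ) (hs : 1 < s.re) (n : ℕ) :
    ‖Fterm s n‖ ≤ ‖riemannZetaSummandHom (ne_zero_of_one_lt_re hs) n‖ := by
  rcases eq_or_ne n 0 with rfl | hn
  · simp [Fterm]
  have hZ : riemannZetaSummandHom (ne_zero_of_one_lt_re hs) n = (n : ℂ) ^ (-s) := rfl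
  rw [Fterm, if_neg hn, hZ, norm_mul]
  have hpsi : (n : ℤ) ≤ dedekindPsi n := le_dedekindPsi hn
  have hnpos : (0:ℤ) < n := by exact_mod_cast Nat.pos_of_ne_zero hn
  have hfrac : ‖(n : ℂ) / (dedekindPsi n : ℂ)‖ ≤ 1 := by
    rw [norm_div]
    simp only [Complex.norm_natCast, Complex.norm_intCast]
    have hpos : (0:ℤ) < dedekindPsi n := hnpos.trans_le hpsi
    have h1 : (n:ℝ) ≤ |(dedekindPsi n : ℝ)| := by
      rw [abs_of_pos (by exact_mod_cast hpos)]
      exact_mod_cast hpsi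
    exact div_le_one_of_le₀ h1 (abs_nonneg _)
  calc ‖(n : ℂ) / (dedekindPsi n : ℂ)‖ * ‖(n : ℂ) ^ (-s)‖
      ≤ 1 * ‖(n : ℂ) ^ (-s)‖ := by gcongr
    _ = ‖(n : ℂ) ^ (-s)‖ := one_mul _

lemma Fterm_summable (s : ℂ) (hs : 1 < s.re) : Summable (fun n => ‖Fterm s n‖) :=
  (summable_riemannZetaSummand hs).of_nonneg_of_le (fun _ => norm_nonneg _) (Fterm_norm_le s hs)

/-! ### Toolbox -/

lemma hasProd_inv₀ {ι : Type*} {f : ι → ℂ} {a : ℂ} (h : HasProd f a) (ha : a ≠ 0) :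
    HasProd (fun i => (f i)⁻¹) a⁻¹ := by
  have := ((continuousAt_inv₀ ha).tendsto).comp h
  simpa [HasProd, Function.comp_def] using this

lemma norm_prime_cpow_lt_one {p : ℕ} (hp : p.Prime) {w : ℂ} (hw : 0 < w.re) :
    ‖(p : ℂ) ^ (-w)‖ < 1 := by
  have hp1 : (1:ℝ) < (p:ℝ) := by exact_mod_cast hp.one_lt
  rw [← ofReal_natCast,
    norm_cpow_eq_rpow_re_of_pos (by positivity), neg_re]
  exact Real.rpow_lt_one_of_one_lt_of_neg hp1 (by linarith)

/-! ### The local factor of the Euler product of `F` -/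

lemma local_sum (s : ℂ) (hs : 1 < s.re) {p : ℕ} (hp : p.Prime) :
    ∑' e : ℕ, Fterm s (p ^ e) =
      (p : ℂ) / ((p : ℂ) + 1) * (1 - (p : ℂ) ^ (-s))⁻¹ + (1 - (p : ℂ) / ((p : ℂ) + 1)) := by
  set P : ℂ := (p : ℂ) with hP
  have hPne : P ≠ 0 := by
    simp only [hP, ne_eq, Nat.cast_eq_zero]; exact hp.ne_zero
  have hu : ‖P ^ (-s)‖ < 1 := norm_prime_cpow_lt_one hp (by linarith)
  set u : ℂ := P ^ (-s) with hu'
  set c : ℂ := P / (P + 1) with hc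
  have hfun : (fun e : ℕ => Fterm s (p ^ e)) =
      fun e : ℕ => c * u ^ e + (if e = 0 then 1 - c else 0) := by
    funext e
    cases e with
    | zero => simp [Fterm_one]
    | succ e =>
      have hne : p ^ (e + 1) ≠ 0 := pow_ne_zero _ hp.ne_zero
      rw [Fterm, if_neg hne]
      have hcpow : ((p ^ (e+1) : ℕ) : ℂ) ^ (-s) = u ^ (e + 1) := by
        have := map_pow (riemannZetaSummandHom (ne_zero_of_one_lt_re hs)) p (e + 1)
        simpa [riemannZetaSummandHom] using this
      have hpsi : ((dedekindPsi (p ^ (e+1)) : ℤ) : ℂ) = P ^ (e+1) + P ^ e := by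
        rw [dedekindPsi_prime_pow hp e]; push_cast; ring
      have hfrac : ((p ^ (e+1) : ℕ) : ℂ) / ((dedekindPsi (p ^ (e+1)) : ℤ) : ℂ) = c := by
        rw [hpsi]
        have h1 : ((p ^ (e+1) : ℕ) : ℂ) = P ^ e * P := by push_cast; ring
        have h2 : P ^ (e+1) + P ^ e = P ^ e * (P + 1) := by ring
        rw [h1, h2, mul_div_mul_left _ _ (pow_ne_zero e hPne)]
      rw [hfrac, hcpow]
      simp
  rw [hfun, Summable.tsum_add ((summable_geometric_of_norm_lt_one hu).mul_left c)
    ((hasSum_ite_eq 0 (1 - c)).summable), tsum_mul_left, tsum_geometric_of_norm_lt_one hu,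
    tsum_ite_eq]

/-! ### The key algebraic identity -/

lemma alg_identity {v P : ℂ} (hv : v ≠ 0) (hP : P ≠ 0) (hP1 : P + 1 ≠ 0)
    (h1 : v - 1 ≠ 0) (h2 : v * P - 1 ≠ 0) :
    (1 - v⁻¹) * ((1 - (v * v * (P * P))⁻¹) * ((1 - (v * P)⁻¹)⁻¹ *
      (P / (P + 1) * (1 - v⁻¹)⁻¹ + (1 - P / (P + 1))))) =
    1 + 1 / (v * (P * P) * (1 + 1 / P)) - 1 / (v * v * (P * P) * (1 + 1 / P)) := by
  have hvv : v * v * (P * P) ≠ 0 := mul_ne_zero (mul_ne_zero hv hv) (mul_ne_zero hP hP)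
  have hd1 : (P + 1) * (v - 1) ≠ 0 := mul_ne_zero hP1 h1
  have k1 : 1 - v⁻¹ = (v - 1) / v := by
    rw [inv_eq_one_div, one_sub_div hv]
  have k2 : 1 - (v * P)⁻¹ = (v * P - 1) / (v * P) := by
    rw [inv_eq_one_div, one_sub_div (mul_ne_zero hv hP)]
  have k3 : 1 - (v * v * (P * P))⁻¹ = (v * v * (P * P) - 1) / (v * v * (P * P)) := by
    rw [inv_eq_one_div, one_sub_div hvv]
  have s1 : 1 - P / (P + 1) = 1 / (P + 1) := by
    rw [one_sub_div hP1, add_sub_cancel_left]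
  have s2 : 1 + 1 / P = (P + 1) / P := by
    rw [one_add_div hP, add_comm]
  rw [k1, k2, k3, s1, s2, inv_div, inv_div]
  rw [div_mul_div_comm P (P+1) v (v-1), div_add_div _ _ hd1 hP1,
    div_mul_div_comm, div_mul_div_comm, div_mul_div_comm]
  rw [show v * (P * P) * ((P + 1) / P) = v * P * (P + 1) * P / P by ring,
    show v * v * (P * P) * ((P + 1) / P) = v * v * P * (P + 1) * P / P by ring,
    mul_div_cancel_right₀ _ hP, mul_div_cancel_right₀ _ hP]
  have hA : v * P * (P + 1) ≠ 0 := mul_ne_zero (mul_ne_zero hv hP) hP1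
  have hB : v * v * P * (P + 1) ≠ 0 := mul_ne_zero (mul_ne_zero (mul_ne_zero hv hv) hP) hP1
  have hL : v * (v * v * (P * P) * ((v * P - 1) * ((P + 1) * (v - 1) * (P + 1)))) ≠ 0 := by
    apply_rules [mul_ne_zero]
  rw [one_add_div hA, div_sub_div _ _ hA hB, div_eq_div_iff hL (mul_ne_zero hA hB)]
  ring

lemma key_identity (s : ℂ) (hs : 1 < s.re) {p : ℕ} (hp : p.Prime) :
    (1 - (p:ℂ) ^ (-s)) * ((1 - (p:ℂ) ^ (-(2*s+2))) * ((1 - (p:ℂ) ^ (-(s+1)))⁻¹ *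
      ((p:ℂ) / ((p:ℂ) + 1) * (1 - (p:ℂ) ^ (-s))⁻¹ + (1 - (p:ℂ) / ((p:ℂ) + 1))))) =
    1 + 1 / ((p:ℂ) ^ (s+2) * (1 + 1 / (p:ℂ))) - 1 / ((p:ℂ) ^ (2*s+2) * (1 + 1 / (p:ℂ))) := by
  set P : ℂ := (p : ℂ) with hP
  have hPne : P ≠ 0 := by simp only [hP, ne_eq, Nat.cast_eq_zero]; exact hp.ne_zero
  have hP1 : P + 1 ≠ 0 := by
    have : P + 1 = ((p + 1 : ℕ) : ℂ) := by push_cast; ring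
    rw [this, Ne, Nat.cast_eq_zero]; omega
  have hv : P ^ s ≠ 0 := by
    rw [cpow_def_of_ne_zero hPne]; exact exp_ne_zero _
  have hP2 : P ^ (2:ℂ) = P * P := by
    rw [show (2:ℂ) = 1 + 1 by norm_num, cpow_add _ _ hPne, cpow_one]
  have e1 : P ^ (-s) = (P ^ s)⁻¹ := cpow_neg P s
  have e2 : P ^ (s + 1) = P ^ s * P := by rw [cpow_add _ _ hPne, cpow_one]
  have e3 : P ^ (s + 2) = P ^ s * (P * P) := by rw [cpow_add _ _ hPne, hP2]
  have e4 : P ^ (2*s + 2) = P ^ s * P ^ s * (P * P) := by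
    rw [show 2*s + 2 = s + s + 2 by ring, cpow_add _ _ hPne, cpow_add _ _ hPne, hP2]
  have e5 : P ^ (-(s+1)) = (P ^ s * P)⁻¹ := by rw [cpow_neg, e2]
  have e6 : P ^ (-(2*s+2)) = (P ^ s * P ^ s * (P * P))⁻¹ := by rw [cpow_neg, e4]
  have h1u : P ^ s - 1 ≠ 0 := by
    intro h
    have h2 := norm_prime_cpow_lt_one hp (w := s) (by linarith)
    rw [← hP, e1] at h2
    rw [sub_eq_zero.mp h] at h2
    simp at h2
  have h1z : P ^ s * P - 1 ≠ 0 := by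
    intro h
    have h2 := norm_prime_cpow_lt_one hp (w := s + 1)
      (by simp only [Complex.add_re, Complex.one_re]; linarith)
    rw [← hP, e5] at h2
    rw [sub_eq_zero.mp h] at h2
    simp at h2
  rw [e1, e3, e4, e5, e6]
  exact alg_identity hv hPne hP1 h1u h1z

/-! ### Main theorem -/

theorem F_factorization (s : ℂ) (hs : 1 < s.re) :
    ∑' n : ℕ, Fterm s n =
      riemannZeta s * riemannZeta (2 * s + 2) / riemannZeta (s + 1) *
        ∏' p : Nat.Primes,
          (1 + 1 / ((p : ℂ) ^ (s + 2) * (1 + 1 / (p : ℂ)))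
             - 1 / ((p : ℂ) ^ (2 * s + 2) * (1 + 1 / (p : ℂ)))) := by
  have h2re : 1 < (2 * s + 2).re := by
    have : (2 * s + 2).re = 2 * s.re + 2 := by simp [Complex.add_re, Complex.mul_re]
    rw [this]; linarith
  have h1re : 1 < (s + 1).re := by
    simp only [Complex.add_re, Complex.one_re]; linarith
  have hζ1 : riemannZeta s ≠ 0 := riemannZeta_ne_zero_of_one_lt_re hs
  have hζ2 : riemannZeta (2 * s + 2) ≠ 0 := riemannZeta_ne_zero_of_one_lt_re h2re
  have hζ3 : riemannZeta (s + 1) ≠ 0 := riemannZeta_ne_zero_of_one_lt_re h1re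
  have hz1 := riemannZeta_eulerProduct_hasProd hs
  have hz2 := riemannZeta_eulerProduct_hasProd h2re
  have hz3 := riemannZeta_eulerProduct_hasProd h1re
  have hF : HasProd (fun p : Nat.Primes => ∑' e : ℕ, Fterm s ((p : ℕ) ^ e))
      (∑' n : ℕ, Fterm s n) :=
    EulerProduct.eulerProduct_hasProd (Fterm_one s) (fun h => Fterm_mul h)
      (Fterm_summable s hs) (by simp [Fterm])
  have hF' : HasProd (fun p : Nat.Primes =>
      (p : ℂ) / ((p : ℂ) + 1) * (1 - (p : ℂ) ^ (-s))⁻¹ + (1 - (p : ℂ) / ((p : ℂ) + 1)))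
      (∑' n : ℕ, Fterm s n) := by
    rwa [show (fun p : Nat.Primes => ∑' e : ℕ, Fterm s ((p : ℕ) ^ e)) =
      (fun p : Nat.Primes =>
        (p : ℂ) / ((p : ℂ) + 1) * (1 - (p : ℂ) ^ (-s))⁻¹ + (1 - (p : ℂ) / ((p : ℂ) + 1)))
      from funext fun p => local_sum s hs p.prop] at hF
  have h1' := hasProd_inv₀ hz1 hζ1
  have h2' := hasProd_inv₀ hz2 hζ2
  simp only [inv_inv] at h1' h2'
  have hbig := h1'.mul (h2'.mul (hz3.mul hF'))
  rw [show (fun p : Nat.Primes => (1 - (p:ℂ) ^ (-s)) * ((1 - (p:ℂ) ^ (-(2*s+2))) *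
      ((1 - (p:ℂ) ^ (-(s+1)))⁻¹ * ((p:ℂ) / ((p:ℂ) + 1) * (1 - (p:ℂ) ^ (-s))⁻¹ +
        (1 - (p:ℂ) / ((p:ℂ) + 1)))))) =
    (fun p : Nat.Primes => 1 + 1 / ((p:ℂ) ^ (s+2) * (1 + 1 / (p:ℂ)))
      - 1 / ((p:ℂ) ^ (2*s+2) * (1 + 1 / (p:ℂ))))
    from funext fun p => key_identity s hs p.prop] at hbig
  rw [hbig.tprod_eq]
  field_simp
  rw [mul_div_assoc, div_self (by rwa [show (2:ℂ) * (s + 1) = 2 * s + 2 by ring]), mul_one]
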